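/- Let N ≥ 2 be an integer and let m be an integer with 0 ≤ m ≤ N. Then Σ_{α=1}^{N−1} η_α^m / |η_α − 1|² = (N²−1)/12 − m(N−1)/2 + m(m−1)/2, where |η_α − 1|² denotes the squared absolute value of η_α − 1. -/

import Mathlib

open Finset

lemma G2 (x : ℂ) (n : ℕ) : (x-1) * ∑ j ∈ Finset.range n, (j:ℂ) * x^j
    = ((n:ℂ)-1)*x^n - ∑ j ∈ Finset.range n, x^j + 1 := by
  induction n with
  | zero => simp
  | succ n ih =>
    rw [Finset.sum_range_succ, Finset.sum_range_succ]
    push_cast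
    linear_combination ih

lemma G3 (x : ℂ) (n : ℕ) : (x-1) * ∑ j ∈ Finset.range n, (j:ℂ)^2 * x^j
    = ((n:ℂ)-1)^2*x^n + ∑ j ∈ Finset.range n, (1-2*(j:ℂ)) * x^j - 1 := by
  induction n with
  | zero => simp
  | succ n ih =>
    rw [Finset.sum_range_succ, Finset.sum_range_succ]
    push_cast
    linear_combination ih

lemma sumI (n : ℕ) : ∑ j ∈ Finset.range n, (j:ℂ) = n*(n-1)/2 := by
  induction n with
  | zero => simp
  | succ n ih => rw [Finset.sum_range_succ, ih]; push_cast; ring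

lemma sumI2 (n : ℕ) : ∑ j ∈ Finset.range n, (j:ℂ)^2 = n*(n-1)*(2*n-1)/6 := by
  induction n with
  | zero => simp
  | succ n ih => rw [Finset.sum_range_succ, ih]; push_cast; ring

lemma key (N : ℕ) (x : ℂ) (hxN : x ^ N = 1) (hx1 : x ≠ 1) :
    (x - 1)^2 * ∑ j ∈ Finset.range N, (((N:ℂ)-2)*j - (j:ℂ)^2) * x^j = 2*N := by
  have hgeom : ∑ j ∈ Finset.range N, x^j = 0 := by
    rw [geom_sum_eq hx1 N, hxN]; simp
  have h2 := G2 x N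
  have h3 := G3 x N
  rw [hxN] at h2 h3
  rw [hgeom] at h2
  have hs2 : ∑ j ∈ Finset.range N, (1-2*(j:ℂ)) * x^j
      = (∑ j ∈ Finset.range N, x^j) - 2 * ∑ j ∈ Finset.range N, (j:ℂ) * x^j := by
    rw [Finset.mul_sum, ← Finset.sum_sub_distrib]
    exact Finset.sum_congr rfl fun j _ => by ring
  rw [hs2, hgeom] at h3
  have hsplit : ∑ j ∈ Finset.range N, (((N:ℂ)-2)*j - (j:ℂ)^2) * x^j
      = ((N:ℂ)-2) * (∑ j ∈ Finset.range N, (j:ℂ) * x^j)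
        - ∑ j ∈ Finset.range N, (j:ℂ)^2 * x^j := by
    rw [Finset.mul_sum, ← Finset.sum_sub_distrib]
    exact Finset.sum_congr rfl fun j _ => by ring
  rw [hsplit]
  linear_combination (((N:ℂ)-2)*(x-1) + 2) * h2 - (x-1) * h3


lemma term_eq (N : ℕ) (hN : 2 ≤ N) (m : ℕ) (x : ℂ) (hxN : x^N = 1) (hx1 : x ≠ 1) :
    x^m / (((‖x-1‖ : ℝ) : ℂ))^2
      = -(1/(2*(N:ℂ))) * ∑ j ∈ Finset.range N, (((N:ℂ)-2)*j - (j:ℂ)^2) * x^(j+m+1) := by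
  have hx0 : x ≠ 0 := by
    intro h; rw [h] at hxN; simp [zero_pow (by omega : N ≠ 0)] at hxN
  have habs : ‖x‖ = 1 := by
    have h1 : ‖x‖ ^ N = 1 := by rw [← norm_pow, hxN, norm_one]
    have h2 : (0:ℝ) ≤ ‖x‖ := norm_nonneg x
    rcases lt_trichotomy (‖x‖) 1 with h|h|h
    · have := pow_lt_one₀ h2 h (by omega : N ≠ 0); linarith
    · exact h
    · have := one_lt_pow₀ h (by omega : N ≠ 0); linarith
  have hconj : x * (starRingEnd ℂ) x = 1 := by
    rw [Complex.mul_conj]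
    norm_cast
    rw [← Complex.sq_norm, habs]; norm_num
  have hconj' : (starRingEnd ℂ) x = x⁻¹ := by
    field_simp at hconj ⊢
    linear_combination hconj
  have hden : (((‖x-1‖ : ℝ) : ℂ))^2 = (x-1) * (x⁻¹ - 1) := by
    rw [← Complex.ofReal_pow, Complex.sq_norm, ← Complex.mul_conj, map_sub, map_one, hconj']
  have hx1' : x - 1 ≠ 0 := sub_ne_zero.mpr hx1
  have hkey := key N x hxN hx1
  have hNC : (N:ℂ) ≠ 0 := Nat.cast_ne_zero.mpr (by omega)
  have hsum : ∑ j ∈ Finset.range N, (((N:ℂ)-2)*j - (j:ℂ)^2) * x^(j+m+1)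
      = (∑ j ∈ Finset.range N, (((N:ℂ)-2)*j - (j:ℂ)^2) * x^j) * x^(m+1) := by
    rw [Finset.sum_mul]
    exact Finset.sum_congr rfl fun j _ => by rw [pow_add, pow_add]; ring
  have hDne : (((‖x-1‖ : ℝ) : ℂ))^2 ≠ 0 := by
    simp only [ne_eq, pow_eq_zero_iff, Complex.ofReal_eq_zero, norm_eq_zero]
    simp [sub_eq_zero, hx1]
  have hD : (((‖x-1‖ : ℝ) : ℂ))^2 * x = -(x-1)^2 := by
    rw [hden]; field_simp; ring
  rw [hsum, div_eq_iff hDne]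
  apply mul_left_cancel₀ hx0
  linear_combination ((1/(2*(N:ℂ))) * (∑ j ∈ Finset.range N, (((N:ℂ)-2)*j - (j:ℂ)^2) * x^j) * x^(m+1)) * hD - (1/(2*(N:ℂ)) * x^(m+1)) * hkey - (x * x^m) * (mul_inv_cancel₀ hNC)

/-- The roots of unity `η_α = exp(2πiα/N)`. -/
noncomputable def η (N α : ℕ) : ℂ :=
  Complex.exp (2 * Real.pi * Complex.I * α / N)


lemma eta_pow (N α : ℕ) : η N α = Complex.exp (2 * Real.pi * Complex.I / N) ^ α := by
  rw [η, ← Complex.exp_nat_mul]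
  congr 1
  ring

lemma eta_pow_N (N α : ℕ) (hN : 2 ≤ N) : η N α ^ N = 1 := by
  rw [eta_pow, pow_right_comm,
    (Complex.isPrimitiveRoot_exp N (by omega : N ≠ 0)).pow_eq_one, one_pow]

lemma eta_ne_one (N α : ℕ) (hN : 2 ≤ N) (h1 : 1 ≤ α) (h2 : α ≤ N - 1) : η N α ≠ 1 := by
  rw [eta_pow]
  intro h
  have hd := ((Complex.isPrimitiveRoot_exp N (by omega : N ≠ 0)).pow_eq_one_iff_dvd α).mp h
  have := Nat.le_of_dvd (by omega) hd
  omega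

lemma sum_pow_Icc (N : ℕ) (hN : 2 ≤ N) (w : ℂ) (hw : w ^ N = 1) :
    ∑ α ∈ Finset.Icc 1 (N-1), w ^ α = if w = 1 then ((N:ℂ)-1) else -1 := by
  have hIcc : Finset.Icc 1 (N-1) = Finset.Ico 1 N := by
    ext a; simp only [Finset.mem_Icc, Finset.mem_Ico]; omega
  split_ifs with h1
  · subst h1
    simp only [one_pow, Finset.sum_const, nsmul_eq_mul, mul_one, hIcc, Nat.card_Ico]
    push_cast [Nat.cast_sub (by omega : 1 ≤ N)]
    ring
  · have h0 : ∑ α ∈ Finset.range N, w ^ α = 0 := by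
      rw [geom_sum_eq h1, hw]; simp
    rw [Finset.range_eq_Ico, Finset.sum_eq_sum_Ico_succ_bot (by omega : 0 < N)] at h0
    rw [hIcc]
    simp only [pow_zero] at h0
    linear_combination h0

lemma main (N : ℕ) (hN : 2 ≤ N) (m : ℕ) (hm : m < N) :
    ∑ α ∈ Finset.Icc 1 (N - 1), η N α ^ m / (((‖η N α - 1‖ : ℝ) : ℂ)) ^ 2
    = ((N : ℂ) ^ 2 - 1) / 12 - (m : ℂ) * ((N : ℂ) - 1) / 2 + (m : ℂ) * ((m : ℂ) - 1) / 2 := by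
  have hprim := Complex.isPrimitiveRoot_exp N (by omega : N ≠ 0)
  have hterm : ∀ α ∈ Finset.Icc 1 (N-1),
      η N α ^ m / (((‖η N α - 1‖ : ℝ) : ℂ))^2
      = ∑ j ∈ Finset.range N, -(1/(2*(N:ℂ))) * ((((N:ℂ)-2)*j - (j:ℂ)^2)
          * (Complex.exp (2 * Real.pi * Complex.I / N) ^ (j+m+1)) ^ α) := by
    intro α hα
    rw [Finset.mem_Icc] at hα
    rw [term_eq N hN m _ (eta_pow_N N α hN) (eta_ne_one N α hN hα.1 hα.2), Finset.mul_sum]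
    apply Finset.sum_congr rfl
    intro j _
    rw [eta_pow, ← pow_mul, ← pow_mul, Nat.mul_comm]
  rw [Finset.sum_congr rfl hterm, Finset.sum_comm]
  have hinner : ∀ j ∈ Finset.range N,
      (∑ α ∈ Finset.Icc 1 (N-1), -(1/(2*(N:ℂ))) * ((((N:ℂ)-2)*j - (j:ℂ)^2)
        * (Complex.exp (2 * Real.pi * Complex.I / N) ^ (j+m+1)) ^ α))
      = -(1/(2*(N:ℂ))) * ((((N:ℂ)-2)*j - (j:ℂ)^2)
          * (if j = N-1-m then ((N:ℂ)-1) else -1)) := by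
    intro j hj
    rw [Finset.mem_range] at hj
    have hw : (Complex.exp (2 * Real.pi * Complex.I / N) ^ (j+m+1)) ^ N = 1 := by
      rw [pow_right_comm, hprim.pow_eq_one, one_pow]
    rw [← Finset.mul_sum, ← Finset.mul_sum, sum_pow_Icc N hN _ hw]
    have hiff : (Complex.exp (2 * Real.pi * Complex.I / N) ^ (j+m+1) = 1) ↔ (j = N-1-m) := by
      rw [hprim.pow_eq_one_iff_dvd]
      constructor
      · rintro ⟨k, hk⟩
        rcases k with _ | _ | k
        · omega
        · omega
        · exfalso
          have h2 : 2*N ≤ N * (k+1+1) := by nlinarith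
          omega
      · rintro rfl
        exact ⟨1, by omega⟩
    rw [if_congr hiff rfl rfl]
  rw [Finset.sum_congr rfl hinner]
  have hj₀ : N-1-m ∈ Finset.range N := by simp; omega
  rw [← Finset.add_sum_erase _ _ hj₀, if_pos rfl]
  have hrest : ∑ j ∈ (Finset.range N).erase (N-1-m),
      -(1/(2*(N:ℂ))) * ((((N:ℂ)-2)*j - (j:ℂ)^2) * (if j = N-1-m then ((N:ℂ)-1) else -1))
      = (1/(2*(N:ℂ))) * ∑ j ∈ (Finset.range N).erase (N-1-m), ((((N:ℂ)-2)*j - (j:ℂ)^2)) := by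
    rw [Finset.mul_sum]
    apply Finset.sum_congr rfl
    intro j hj
    rw [if_neg (Finset.mem_erase.mp hj).1]
    ring
  rw [hrest, Finset.sum_erase_eq_sub hj₀]
  have hSc : ∑ j ∈ Finset.range N, (((N:ℂ)-2)*(j:ℂ) - (j:ℂ)^2)
      = ((N:ℂ)-2)*((N:ℂ)*((N:ℂ)-1)/2) - (N:ℂ)*((N:ℂ)-1)*(2*(N:ℂ)-1)/6 := by
    rw [Finset.sum_sub_distrib, ← Finset.mul_sum, sumI, sumI2]
  rw [hSc]
  have hcast : ((N-1-m : ℕ):ℂ) = (N:ℂ) - 1 - (m:ℂ) := by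
    have h : N-1-m = N-(m+1) := by omega
    rw [h, Nat.cast_sub (by omega : m+1 ≤ N)]
    push_cast
    ring
  rw [hcast]
  have hNC : (N:ℂ) ≠ 0 := Nat.cast_ne_zero.mpr (by omega)
  field_simp
  ring

theorem stmt13 (N : ℕ) (hN : 2 ≤ N) (m : ℕ) (hm : m ≤ N) :
    ∑ α ∈ Finset.Icc 1 (N - 1), η N α ^ m / (((‖η N α - 1‖ : ℝ) : ℂ)) ^ 2
    = ((N : ℂ) ^ 2 - 1) / 12 - (m : ℂ) * ((N : ℂ) - 1) / 2 + (m : ℂ) * ((m : ℂ) - 1) / 2 := by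
  rcases Nat.lt_or_ge m N with h | h
  · exact main N hN m h
  · have hmN : m = N := le_antisymm hm h
    rw [hmN]
    have h0 : ∀ α ∈ Finset.Icc 1 (N-1),
        η N α ^ N / (((‖η N α - 1‖ : ℝ) : ℂ))^2
        = η N α ^ 0 / (((‖η N α - 1‖ : ℝ) : ℂ))^2 := by
      intro α hα
      rw [eta_pow_N N α hN, pow_zero]
    rw [Finset.sum_congr rfl h0, main N hN 0 (by omega)]
    push_cast
    ring
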